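/- arXiv:math/0005029 — 4 statements merged into one kernel-verified Lean document; each statement's English description precedes it below -/
import Mathlib

section
/- Let G be a finite group acting transitively and faithfully on a finite set X with N := |X| ≥ 2. Then the number of elements of G that fix at least one point of X is at most (1 − 1/N)·|G|; equivalently, N · #{g ∈ G : ∃ x ∈ X, g·x = x} ≤ (N − 1) · |G|. -/
open MulAction Finset

/-- **Cameron–Cohen bound.** If a finite group `G` acts transitively and faithfully on a
finite set `X` with `N := |X| ≥ 2`, then the number of elements of `G` fixing at least one
point satisfies `N * #{g | ∃ x, g • x = x} ≤ (N - 1) * |G|`. -/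
theorem stmt0 (G X : Type*) [Group G] [Fintype G] [Fintype X] [MulAction G X]
    (htrans : ∀ x y : X, ∃ g : G, g • x = y)
    (hfaith : ∀ g : G, (∀ x : X, g • x = x) → g = 1)
    (hN : 2 ≤ Fintype.card X) :
    Fintype.card X * Nat.card {g : G // ∃ x : X, g • x = x} ≤
      (Fintype.card X - 1) * Fintype.card G := by
  classical
  haveI : Nonempty X := Fintype.card_pos_iff.mp (by omega)
  haveI : IsPretransitive G X := ⟨fun x y => htrans x y⟩
  set N := Fintype.card X with hNdef
  set nG := Fintype.card G with hGdef
  -- fixed point counts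
  let fix : G → ℕ := fun g => Fintype.card (fixedBy X g)
  -- Burnside on X
  have hsub : Subsingleton (orbitRel.Quotient G X) := by
    constructor
    rintro ⟨x⟩ ⟨y⟩
    exact Quotient.sound (MulAction.orbitRel_apply.mpr (by
      obtain ⟨g, hg⟩ := htrans y x
      exact ⟨g, hg⟩))
  haveI := hsub
  have hcard1 : Fintype.card (orbitRel.Quotient G X) = 1 :=
    Fintype.card_eq_one_iff_nonempty_unique.mpr ⟨⟨⟨Quotient.mk _ Classical.ofNonempty⟩, fun _ => Subsingleton.elim _ _⟩⟩
  have burnside1 : (∑ g : G, fix g) = nG := by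
    have := MulAction.sum_card_fixedBy_eq_card_orbits_mul_card_group G X
    rw [hcard1, one_mul] at this
    exact this
  -- fixedBy on the product
  have hprodfix : ∀ g : G, Fintype.card (fixedBy (X × X) g) = fix g * fix g := by
    intro g
    rw [← Fintype.card_prod]
    refine Fintype.card_congr ?_
    exact
      { toFun := fun p => (⟨p.1.1, congrArg Prod.fst p.2⟩, ⟨p.1.2, congrArg Prod.snd p.2⟩)
        invFun := fun q => ⟨(q.1.1, q.2.1), Prod.ext q.1.2 q.2.2⟩
        left_inv := fun p => by ext <;> rfl
        right_inv := fun q => by ext <;> rfl }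
  -- rank ≥ 2
  obtain ⟨x, y, hxy⟩ := Fintype.exists_pair_of_one_lt_card (α := X) (by omega)
  have hrank2 : 2 ≤ Fintype.card (orbitRel.Quotient G (X × X)) := by
    refine Fintype.one_lt_card_iff_nontrivial.mpr (nontrivial_of_ne
      (Quotient.mk _ ((x, x) : X × X)) (Quotient.mk _ ((x, y) : X × X)) ?_)
    intro h
    have h' := (MulAction.orbitRel_apply (G := G)).mp (Quotient.exact h)
    obtain ⟨g, hg⟩ := h'
    have h1 : g • x = x := congrArg Prod.fst hg
    have h2 : g • y = x := congrArg Prod.snd hg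
    exact hxy (smul_left_cancel g (h1.trans h2.symm))
  have burnside2 : 2 * nG ≤ ∑ g : G, fix g * fix g := by
    have := MulAction.sum_card_fixedBy_eq_card_orbits_mul_card_group G (X × X)
    calc 2 * nG ≤ Fintype.card (orbitRel.Quotient G (X × X)) * nG :=
          Nat.mul_le_mul_right _ hrank2
      _ = ∑ g : G, Fintype.card (fixedBy (X × X) g) := this.symm
      _ = ∑ g : G, fix g * fix g := by simp [hprodfix]
  -- the fixer set
  set F : Finset G := Finset.univ.filter (fun g => ∃ x : X, g • x = x) with hF
  have hcardF : Nat.card {g : G // ∃ x : X, g • x = x} = F.card := by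
    rw [Nat.card_eq_fintype_card, Fintype.card_subtype]
  have hfix0 : ∀ g ∉ F, fix g = 0 := by
    intro g hg
    simp only [hF, mem_filter, mem_univ, true_and, not_exists] at hg
    exact Fintype.card_eq_zero_iff.mpr ⟨fun ⟨a, ha⟩ => hg a ha⟩
  have hfix1 : ∀ g ∈ F, 1 ≤ fix g := by
    intro g hg
    simp only [hF, mem_filter, mem_univ, true_and] at hg
    obtain ⟨a, ha⟩ := hg
    exact Fintype.card_pos_iff.mpr ⟨⟨a, ha⟩⟩
  have hfixN : ∀ g : G, fix g ≤ N := fun g =>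
    Fintype.card_le_of_injective Subtype.val Subtype.val_injective
  have sum1 : (∑ g ∈ F, fix g) = nG := by
    rw [← burnside1]
    exact Finset.sum_subset (subset_univ F) (fun g _ hg => hfix0 g hg)
  have sum2 : 2 * nG ≤ ∑ g ∈ F, fix g * fix g := by
    refine burnside2.trans (le_of_eq ?_)
    exact (Finset.sum_subset (subset_univ F) (fun g _ hg => by rw [hfix0 g hg]; ring)).symm

  have key : ∑ g ∈ F, (fix g * fix g + N) ≤ ∑ g ∈ F, (N + 1) * fix g := by
    refine Finset.sum_le_sum (fun g hg => ?_)
    have h1 := hfix1 g hg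
    have h2 := hfixN g
    nlinarith
  rw [Finset.sum_add_distrib, Finset.sum_const, smul_eq_mul, ← Finset.mul_sum, sum1] at key
  have : 2 * nG + F.card * N ≤ (N + 1) * nG := le_trans (by omega) (le_trans (Nat.add_le_add_right sum2 _) key)
  have hN1 : (N - 1) * nG = N * nG - nG := by
    cases N with
    | zero => omega
    | succ n => simp [Nat.succ_sub_one, Nat.succ_mul]
  rw [hcardF, mul_comm, hN1]
  have hmul : (N + 1) * nG = N * nG + nG := by ring
  omega
end

section
/- The polynomial f(x) = (x² − 2)(x² − 7)(x² − 14) has no rational root, and yet for every prime p there exists x ∈ ℤ/pℤ with (x² − 2)(x² − 7)(x² − 14) = 0 in ℤ/pℤ. -/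
lemma not_sq {n : ℕ} (hn : Nat.sqrt n * Nat.sqrt n ≠ n) : ¬ IsSquare n := by
  rintro ⟨r, hr⟩
  rw [hr, Nat.sqrt_eq r] at hn
  exact hn rfl

lemma no_rat_sq (n : ℕ) (hn : ¬ IsSquare n) (q : ℚ) : q ^ 2 ≠ n := by
  intro h
  exact hn (Rat.isSquare_natCast_iff.mp ⟨q, by rw [← h]; ring⟩)

lemma sq_cases (p : ℕ) (hp : p.Prime) :
    IsSquare (2 : ZMod p) ∨ IsSquare (7 : ZMod p) ∨ IsSquare (14 : ZMod p) := by
  haveI : Fact p.Prime := ⟨hp⟩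
  by_cases h2 : IsSquare (2 : ZMod p)
  · exact Or.inl h2
  by_cases h7 : IsSquare (7 : ZMod p)
  · exact Or.inr (Or.inl h7)
  right; right
  have h2n : (2 : ZMod p) ≠ 0 := fun h => h2 ⟨0, by rw [h]; ring⟩
  have h7n : (7 : ZMod p) ≠ 0 := fun h => h7 ⟨0, by rw [h]; ring⟩
  have hq2 : quadraticChar (ZMod p) 2 = -1 := (quadraticChar_neg_one_iff_not_isSquare.mpr h2).trans rfl
  have hq7 : quadraticChar (ZMod p) 7 = -1 := quadraticChar_neg_one_iff_not_isSquare.mpr h7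
  have h14 : (14 : ZMod p) = 2 * 7 := by norm_num
  have : quadraticChar (ZMod p) 14 = 1 := by
    rw [h14, map_mul, hq2, hq7]; ring
  exact (quadraticChar_one_iff_isSquare (by rw [h14]; exact mul_ne_zero h2n h7n)).mp this

/-- The polynomial `(x² − 2)(x² − 7)(x² − 14)` has no rational root, yet it has a root
modulo every prime `p`. -/
theorem stmt1 :
    (∀ q : ℚ, (q ^ 2 - 2) * (q ^ 2 - 7) * (q ^ 2 - 14) ≠ 0) ∧
    (∀ p : ℕ, p.Prime →
      ∃ x : ZMod p, (x ^ 2 - 2) * (x ^ 2 - 7) * (x ^ 2 - 14) = 0) := by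
  constructor
  · intro q h
    rcases mul_eq_zero.mp h with h | h
    · rcases mul_eq_zero.mp h with h | h
      · exact no_rat_sq 2 (not_sq (by norm_num)) q (by push_cast at h ⊢; linarith)
      · exact no_rat_sq 7 (not_sq (by norm_num)) q (by push_cast at h ⊢; linarith)
    · exact no_rat_sq 14 (not_sq (by norm_num)) q (by push_cast at h ⊢; linarith)
  · intro p hp
    rcases sq_cases p hp with ⟨x, hx⟩ | ⟨x, hx⟩ | ⟨x, hx⟩
    · exact ⟨x, by rw [show x ^ 2 = x * x by ring, ← hx]; ring⟩
    · exact ⟨x, by rw [show x ^ 2 = x * x by ring, ← hx]; ring⟩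
    · exact ⟨x, by rw [show x ^ 2 = x * x by ring, ← hx]; ring⟩
end

section
/- Suppose g ∈ ℤ[x] is square-free with δ := deg g ≥ 1. Then log|Δ_g| ≤ (2δ − 1)·σ(g) + ((2δ − 1)/2)·log(δ + 1) + (δ/2)·log(δ(2δ + 1)/6). -/
open Matrix Finset

set_option maxHeartbeats 1000000

/-- The size of an integer `c`: `1 + ⌈log₂(|c| + 1)⌉`. -/
noncomputable def sizeInt (c : ℤ) : ℕ := 1 + ⌈Real.logb 2 ((c.natAbs : ℝ) + 1)⌉₊

/-- The (sparse) size `σ(g)` of an integer polynomial: the maximum of the sizes of its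
nonzero coefficients. -/
noncomputable def sigmaSize (g : Polynomial ℤ) : ℕ :=
  g.support.sup fun i => sizeInt (g.coeff i)

/-- The `(2δ−1) × (2δ−1)` Sylvester-type matrix of `g` and its derivative `g'` (for
`δ := deg g`): the first `δ − 1` rows are shifted copies of the coefficient vector of `g`,
and the last `δ` rows are shifted copies of the coefficient vector of `g'`. -/
noncomputable def discMatrix (g : Polynomial ℤ) :
    Matrix (Fin (2 * g.natDegree - 1)) (Fin (2 * g.natDegree - 1)) ℤ :=
  fun i j =>
    if (i : ℕ) < g.natDegree - 1 then
      (if (i : ℕ) ≤ (j : ℕ) then g.coeff ((j : ℕ) - (i : ℕ)) else 0)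
    else
      (if (i : ℕ) - (g.natDegree - 1) ≤ (j : ℕ) then
        (Polynomial.derivative g).coeff ((j : ℕ) - ((i : ℕ) - (g.natDegree - 1)))
      else 0)

/-- The discriminant `Δ_g = (−1)^(δ(δ−1)/2) · Res(g, g') / lc(g)` of `g ∈ ℤ[x]`,
where the resultant `Res(g, g')` is the determinant of the Sylvester matrix above. -/
noncomputable def disc (g : Polynomial ℤ) : ℚ :=
  ((-1 : ℚ) ^ (g.natDegree * (g.natDegree - 1) / 2) * ((discMatrix g).det : ℚ)) /
    (g.leadingCoeff : ℚ)

lemma conjT_eq_transpose {m : Type*} [Fintype m] (A : Matrix m m ℝ) : Aᴴ = Aᵀ := by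
  ext i j; simp [conjTranspose_apply]

lemma posdef_self_mul_transpose {m : Type*} [Fintype m] [DecidableEq m]
    (A : Matrix m m ℝ) (h : A.det ≠ 0) : (A * Aᵀ).PosDef := by
  have hps : (A * Aᵀ).PosSemidef := by
    have := posSemidef_self_mul_conjTranspose A
    rwa [conjT_eq_transpose] at this
  refine PosDef.of_dotProduct_mulVec_pos hps.1 fun x hx => ?_
  have h0 : star x ⬝ᵥ (A * Aᵀ) *ᵥ x ≠ 0 := by
    intro h0
    have hz := (hps.dotProduct_mulVec_zero_iff x).mp h0
    exact hx (eq_zero_of_mulVec_eq_zero (by simp [Matrix.det_mul, h]) hz)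
  exact lt_of_le_of_ne (hps.dotProduct_mulVec_nonneg x) (Ne.symm h0)

/-- **Hadamard's inequality** (squared form): the square of the determinant is at most the
product of the squared Euclidean norms of the rows. -/
lemma hadamard_ineq {m : Type*} [Fintype m] [LinearOrder m] [WellFoundedLT m]
    [LocallyFiniteOrderBot m] (A : Matrix m m ℝ) :
    A.det ^ 2 ≤ ∏ i, ∑ j, A i j ^ 2 := by
  rcases eq_or_ne A.det 0 with h | h
  · rw [h]
    simpa using Finset.prod_nonneg fun i _ => Finset.sum_nonneg fun j _ => sq_nonneg (A i j)
  · set S := A * Aᵀ with hSdef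
    have hS : S.PosDef := posdef_self_mul_transpose A h
    set L := LDL.lower hS with hL
    set d := LDL.diagEntries hS with hd
    have hdnn : ∀ k, 0 ≤ d k := by
      have hps : (LDL.diag hS).PosSemidef := by
        rw [LDL.diag_eq_lowerInv_conj hS]
        exact hS.posSemidef.mul_mul_conjTranspose_same _
      rw [LDL.diag] at hps
      exact posSemidef_diagonal_iff.mp hps
    have hdecomp : L * LDL.diag hS * Lᵀ = S := by
      have := LDL.lower_conj_diag hS
      rwa [conjT_eq_transpose] at this
    have hLtri : L.BlockTriangular OrderDual.toDual := by
      have h1 : (LDL.lowerInv hS).BlockTriangular OrderDual.toDual := fun i j hij =>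
        LDL.lowerInv_triangular hS hij
      haveI := LDL.invertibleLowerInv hS
      exact blockTriangular_inv_of_blockTriangular h1
    have hdetL : L.det = ∏ i, L i i := det_of_lowerTriangular L hLtri
    have hSdiag : ∀ i, S i i = ∑ k, L i k ^ 2 * d k := by
      intro i
      rw [← hdecomp]
      simp [Matrix.mul_apply, LDL.diag, Matrix.diagonal, Matrix.transpose_apply,
        Finset.sum_mul, sq, mul_comm, mul_assoc, mul_left_comm]
      rfl
    have hstep : ∀ i, L i i ^ 2 * d i ≤ S i i := by
      intro i
      rw [hSdiag i]
      exact Finset.single_le_sum (fun k _ => mul_nonneg (sq_nonneg _) (hdnn k))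
        (Finset.mem_univ i)
    have hdetS : S.det = A.det ^ 2 := by
      rw [hSdef, Matrix.det_mul, Matrix.det_transpose, sq]
    have hdetD : (LDL.diag hS).det = ∏ i, d i := by
      rw [LDL.diag, Matrix.det_diagonal]
    calc A.det ^ 2 = S.det := hdetS.symm
      _ = ∏ i, L i i ^ 2 * d i := by
          rw [← hdecomp, Matrix.det_mul, Matrix.det_mul, Matrix.det_transpose, hdetD, hdetL]
          rw [← Finset.prod_mul_distrib, ← Finset.prod_mul_distrib]
          exact Finset.prod_congr rfl fun i _ => by ring
      _ ≤ ∏ i, S i i := Finset.prod_le_prod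
          (fun i _ => mul_nonneg (sq_nonneg _) (hdnn i)) (fun i _ => hstep i)
      _ = ∏ i, ∑ j, A i j ^ 2 := Finset.prod_congr rfl fun i _ => by
          simp [hSdef, Matrix.mul_apply, Matrix.transpose_apply, sq]

lemma hadamard_fin (N : ℕ) (B : Matrix (Fin N) (Fin N) ℝ) :
    B.det ^ 2 ≤ ∏ i, ∑ j, B i j ^ 2 := by
  have h := @hadamard_ineq (Fin N) (Fin.fintype N) Fin.instLinearOrder
    IsWellOrder.toIsWellFounded (Fin.instLocallyFiniteOrderBot N) B
  convert h using 3

lemma one_le_sigma (g : Polynomial ℤ) (hg : g ≠ 0) : 1 ≤ sigmaSize g := by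
  have h : g.natDegree ∈ g.support := by
    rw [Polynomial.mem_support_iff]
    exact Polynomial.leadingCoeff_ne_zero.mpr hg
  calc 1 ≤ sizeInt (g.coeff g.natDegree) := Nat.le_add_right 1 _
    _ ≤ sigmaSize g := Finset.le_sup (f := fun i => sizeInt (g.coeff i)) h

lemma coeff_bound (g : Polynomial ℤ) (hg : g ≠ 0) (k : ℕ) :
    |((g.coeff k : ℤ) : ℝ)| ≤ (2:ℝ) ^ ((sigmaSize g : ℝ) - 1) := by
  have hσ := one_le_sigma g hg
  have hC1 : (1:ℝ) ≤ (2:ℝ) ^ ((sigmaSize g : ℝ) - 1) := by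
    apply Real.one_le_rpow one_le_two
    have : (1:ℝ) ≤ (sigmaSize g : ℝ) := by exact_mod_cast hσ
    linarith
  by_cases hk : g.coeff k = 0
  · rw [hk]; simpa using le_trans zero_le_one hC1
  · have hks : k ∈ g.support := Polynomial.mem_support_iff.mpr hk
    have h1 : sizeInt (g.coeff k) ≤ sigmaSize g :=
      Finset.le_sup (f := fun i => sizeInt (g.coeff i)) hks
    have h3 : ⌈Real.logb 2 (((g.coeff k).natAbs : ℝ) + 1)⌉₊ ≤ sigmaSize g - 1 := by
      unfold sizeInt at h1; omega
    have h2 : Real.logb 2 (((g.coeff k).natAbs : ℝ) + 1) ≤ (sigmaSize g : ℝ) - 1 := by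
      calc Real.logb 2 (((g.coeff k).natAbs : ℝ) + 1)
          ≤ (⌈Real.logb 2 (((g.coeff k).natAbs : ℝ) + 1)⌉₊ : ℝ) := Nat.le_ceil _
        _ ≤ ((sigmaSize g - 1 : ℕ) : ℝ) := by exact_mod_cast h3
        _ = (sigmaSize g : ℝ) - 1 := by rw [Nat.cast_sub hσ]; simp
    rw [Real.logb_le_iff_le_rpow one_lt_two (by positivity)] at h2
    have habs : |((g.coeff k : ℤ) : ℝ)| = ((g.coeff k).natAbs : ℝ) := by
      rw [Nat.cast_natAbs]; push_cast; ring
    rw [habs]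
    linarith

lemma shifted_rowsum (p : Polynomial ℤ) (N s K : ℕ) (hK : p.natDegree < K) :
    ∑ j : Fin N, (((if s ≤ (j:ℕ) then p.coeff ((j:ℕ) - s) else 0) : ℤ) : ℝ)^2
      ≤ ∑ k ∈ Finset.range K, ((p.coeff k : ℝ))^2 := by
  have hterm : ∀ j : Fin N, (((if s ≤ (j:ℕ) then p.coeff ((j:ℕ) - s) else 0) : ℤ) : ℝ)^2
      = if s ≤ (j:ℕ) then ((p.coeff ((j:ℕ) - s) : ℝ))^2 else 0 := by
    intro j; split_ifs <;> simp
  simp only [hterm]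
  rw [← Finset.sum_filter]
  set T := Finset.univ.filter (fun j : Fin N => s ≤ (j:ℕ)) with hT
  have hinj : ∀ x ∈ T, ∀ y ∈ T, (x:ℕ) - s = (y:ℕ) - s → x = y := by
    intro x hx y hy hxy
    rw [hT, Finset.mem_filter] at hx hy
    exact Fin.ext (by omega)
  rw [← Finset.sum_image (f := fun k => ((p.coeff k : ℝ))^2) hinj]
  set I := T.image (fun j : Fin N => (j:ℕ) - s) with hI
  have h1 : ∑ k ∈ I ∩ Finset.range K, ((p.coeff k : ℝ))^2
      = ∑ k ∈ I, ((p.coeff k : ℝ))^2 := by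
    apply Finset.sum_subset Finset.inter_subset_left
    intro x hx hnx
    have hxK : K ≤ x := by
      by_contra hc
      exact hnx (Finset.mem_inter.mpr ⟨hx, Finset.mem_range.mpr (by omega)⟩)
    rw [Polynomial.coeff_eq_zero_of_natDegree_lt (lt_of_lt_of_le hK hxK)]
    simp
  rw [← h1]
  apply Finset.sum_le_sum_of_subset_of_nonneg Finset.inter_subset_right
  intros; positivity

lemma sum_sq_formula (n : ℕ) :
    ∑ k ∈ Finset.range n, ((k:ℝ)+1)^2 = (n:ℝ)*((n:ℝ)+1)*(2*(n:ℝ)+1)/6 := by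
  induction n with
  | zero => simp
  | succ m ih => rw [Finset.sum_range_succ, ih]; push_cast; ring

/-- If `g ∈ ℤ[x]` is square-free of degree `δ ≥ 1`, then
`log|Δ_g| ≤ (2δ−1)σ(g) + ((2δ−1)/2)·log(δ+1) + (δ/2)·log(δ(2δ+1)/6)`. -/
theorem stmt7 (g : Polynomial ℤ) (hsf : Squarefree g) (hdeg : 1 ≤ g.natDegree) :
    Real.log |(disc g : ℝ)| ≤
      (2 * (g.natDegree : ℝ) - 1) * (sigmaSize g : ℝ) +
      ((2 * (g.natDegree : ℝ) - 1) / 2) * Real.log ((g.natDegree : ℝ) + 1) +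
      ((g.natDegree : ℝ) / 2) *
        Real.log ((g.natDegree : ℝ) * (2 * (g.natDegree : ℝ) + 1) / 6) := by
  have hg : g ≠ 0 := fun h => by simp [h] at hdeg
  set δ := g.natDegree with hδ
  set n := 2 * δ - 1 with hn
  set d : ℝ := (δ : ℝ) with hdd
  have hd1 : (1:ℝ) ≤ d := by rw [hdd]; exact_mod_cast hdeg
  have hσ := one_le_sigma g hg
  set s : ℝ := (sigmaSize g : ℝ) with hs
  have hs1 : (1:ℝ) ≤ s := by rw [hs]; exact_mod_cast hσ
  set C : ℝ := (2:ℝ) ^ (s - 1) with hC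
  have hC0 : 0 < C := Real.rpow_pos_of_pos two_pos _
  have hC1 : (1:ℝ) ≤ C := Real.one_le_rpow one_le_two (by linarith)
  have hcoeff : ∀ k, ((g.coeff k : ℝ))^2 ≤ C^2 := by
    intro k
    have := coeff_bound g hg k
    calc ((g.coeff k : ℝ))^2 = |((g.coeff k : ℝ))|^2 := (sq_abs _).symm
      _ ≤ C^2 := by apply pow_le_pow_left₀ (abs_nonneg _) this
  set B₁ : ℝ := (d+1) * C^2 with hB₁
  set B₂ : ℝ := C^2 * (d*(d+1)*(2*d+1)/6) with hB₂
  have hC2 : (1:ℝ) ≤ C^2 := one_le_pow₀ hC1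
  have hB₁1 : (1:ℝ) ≤ B₁ := by rw [hB₁]; nlinarith
  have hX6 : (1:ℝ) ≤ d*(d+1)*(2*d+1)/6 := by nlinarith [hd1, sq_nonneg (d-1), sq_nonneg d, sq_nonneg (d+1)]
  have hB₂1 : (1:ℝ) ≤ B₂ := by
    rw [hB₂]
    calc (1:ℝ) = 1 * 1 := by norm_num
      _ ≤ C^2 * (d*(d+1)*(2*d+1)/6) := mul_le_mul hC2 hX6 (by norm_num) (by positivity)
  set A : Matrix (Fin (2 * g.natDegree - 1)) (Fin (2 * g.natDegree - 1)) ℝ :=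
    (discMatrix g).map (Int.cast : ℤ → ℝ) with hA
  have hAdet : A.det = (((discMatrix g).det : ℤ) : ℝ) := by
    have h : A = (Int.castRingHom ℝ).mapMatrix (discMatrix g) := rfl
    rw [h, ← RingHom.map_det]; rfl
  -- row bounds
  have hrow : ∀ i, (∑ j, A i j ^ 2) ≤ (if (i : ℕ) < δ - 1 then B₁ else B₂) := by
    intro i
    by_cases hi : (i : ℕ) < δ - 1
    · rw [if_pos hi]
      have he : ∀ j, A i j
          = (((if (i:ℕ) ≤ (j:ℕ) then g.coeff ((j:ℕ) - (i:ℕ)) else 0) : ℤ) : ℝ) := by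
        intro j
        simp only [hA, Matrix.map_apply, discMatrix, if_pos (show (i:ℕ) < g.natDegree - 1 from hi)]
      calc (∑ j, A i j ^ 2)
          = ∑ j : Fin (2 * g.natDegree - 1), (((if (i:ℕ) ≤ (j:ℕ) then g.coeff ((j:ℕ) - (i:ℕ)) else 0) : ℤ) : ℝ)^2 := by
            exact Finset.sum_congr rfl fun j _ => by rw [he j]
        _ ≤ ∑ k ∈ Finset.range (δ + 1), ((g.coeff k : ℝ))^2 :=
            shifted_rowsum g _ _ _ (by omega)
        _ ≤ ∑ _k ∈ Finset.range (δ + 1), C^2 :=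
            Finset.sum_le_sum fun k _ => hcoeff k
        _ = ((δ : ℝ) + 1) * C^2 := by
            rw [Finset.sum_const, Finset.card_range]; push_cast; ring
        _ = B₁ := rfl
    · rw [if_neg hi]
      have he : ∀ j, A i j
          = (((if (i:ℕ) - (δ - 1) ≤ (j:ℕ) then
              (Polynomial.derivative g).coeff ((j:ℕ) - ((i:ℕ) - (δ - 1))) else 0) : ℤ) : ℝ) := by
        intro j
        simp only [hA, Matrix.map_apply, discMatrix, if_neg (show ¬ (i:ℕ) < g.natDegree - 1 from hi)]
        rfl
      have hd' : (Polynomial.derivative g).natDegree < δ :=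
        Polynomial.natDegree_derivative_lt (by omega)
      calc (∑ j, A i j ^ 2)
          = ∑ j : Fin (2 * g.natDegree - 1), (((if (i:ℕ) - (δ - 1) ≤ (j:ℕ) then
              (Polynomial.derivative g).coeff ((j:ℕ) - ((i:ℕ) - (δ - 1))) else 0) : ℤ) : ℝ)^2 :=
            Finset.sum_congr rfl fun j _ => by rw [he j]
        _ ≤ ∑ k ∈ Finset.range δ, (((Polynomial.derivative g).coeff k : ℝ))^2 :=
            shifted_rowsum (Polynomial.derivative g) _ _ _ hd'
        _ ≤ ∑ k ∈ Finset.range δ, ((k:ℝ)+1)^2 * C^2 := by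
            apply Finset.sum_le_sum
            intro k _
            rw [Polynomial.coeff_derivative]
            push_cast
            calc ((g.coeff (k+1) : ℝ) * ((k:ℝ)+1))^2
                = ((g.coeff (k+1) : ℝ))^2 * ((k:ℝ)+1)^2 := by ring
              _ ≤ C^2 * ((k:ℝ)+1)^2 := by
                  apply mul_le_mul_of_nonneg_right (hcoeff _) (by positivity)
              _ = ((k:ℝ)+1)^2 * C^2 := by ring
        _ = (∑ k ∈ Finset.range δ, ((k:ℝ)+1)^2) * C^2 := by rw [Finset.sum_mul]
        _ = B₂ := by rw [sum_sq_formula]; rw [hB₂]; ring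
  -- hadamard
  have hhad : A.det ^ 2 ≤ B₁ ^ (δ - 1) * B₂ ^ δ := by
    have h1 : A.det ^ 2 ≤ ∏ i, ∑ j, A i j ^ 2 :=
      hadamard_fin (2 * g.natDegree - 1) A
    have h2 : (∏ i, ∑ j, A i j ^ 2) ≤ ∏ i : Fin (2 * g.natDegree - 1),
        (if (i : ℕ) < δ - 1 then B₁ else B₂) :=
      Finset.prod_le_prod (fun i _ => Finset.sum_nonneg fun j _ => sq_nonneg _)
        (fun i _ => hrow i)
    have h3 : (∏ i : Fin (2 * g.natDegree - 1), (if (i : ℕ) < δ - 1 then B₁ else B₂))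
        = B₁ ^ (δ - 1) * B₂ ^ δ := by
      rw [Fin.prod_univ_eq_prod_range (fun k => if k < δ - 1 then B₁ else B₂)]
      rw [Finset.range_eq_Ico,
        ← Finset.prod_Ico_consecutive _ (Nat.zero_le (δ - 1)) (by omega : δ - 1 ≤ 2 * δ - 1)]
      have e1 : ∏ k ∈ Finset.Ico 0 (δ - 1), (if k < δ - 1 then B₁ else B₂) = B₁ ^ (δ - 1) := by
        rw [Finset.prod_congr rfl (fun k hk => if_pos (by
          rw [Finset.mem_Ico] at hk; omega))]
        rw [Finset.prod_const, Nat.card_Ico]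
        norm_num
      have e2 : ∏ k ∈ Finset.Ico (δ - 1) (2 * δ - 1), (if k < δ - 1 then B₁ else B₂)
          = B₂ ^ δ := by
        rw [Finset.prod_congr rfl (fun k hk => if_neg (by
          rw [Finset.mem_Ico] at hk; omega))]
        rw [Finset.prod_const, Nat.card_Ico]
        congr 1
        omega
      rw [e1, e2]
    have h4 := le_trans h1 h2
    rw [h3] at h4
    exact h4
  -- from determinant to discriminant
  have hlc : (1:ℝ) ≤ |((g.leadingCoeff : ℤ) : ℝ)| := by
    have h0 : g.leadingCoeff ≠ 0 := Polynomial.leadingCoeff_ne_zero.mpr hg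
    have := Int.one_le_abs h0
    calc (1:ℝ) = ((1:ℤ):ℝ) := by norm_num
      _ ≤ ((|g.leadingCoeff| : ℤ) : ℝ) := by exact_mod_cast this
      _ = |((g.leadingCoeff : ℤ) : ℝ)| := by push_cast; ring
  have hdisc : |((disc g : ℚ) : ℝ)| ≤ |A.det| := by
    have hcast : ((disc g : ℚ) : ℝ)
        = ((-1 : ℝ) ^ (δ * (δ - 1) / 2) * (((discMatrix g).det : ℤ) : ℝ))
          / ((g.leadingCoeff : ℤ) : ℝ) := by
      rw [disc]; push_cast; simp only [Matrix.map_map, Function.comp_def, Rat.cast_intCast]; ring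
    rw [hcast, abs_div, abs_mul, abs_pow, abs_neg, abs_one, one_pow, one_mul, hAdet]
    calc |(((discMatrix g).det : ℤ) : ℝ)| / |((g.leadingCoeff : ℤ) : ℝ)|
        ≤ |(((discMatrix g).det : ℤ) : ℝ)| / 1 := by
          apply div_le_div_of_nonneg_left (abs_nonneg _) (by linarith) hlc
      _ = |(((discMatrix g).det : ℤ) : ℝ)| := by ring
  -- final logarithmic estimates
  have hd0 : (0:ℝ) < d := lt_of_lt_of_le one_pos hd1
  set P : ℝ := B₁ ^ (δ - 1) * B₂ ^ δ with hP
  have hB₁0 : (0:ℝ) < B₁ := lt_of_lt_of_le one_pos hB₁1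
  have hB₂0 : (0:ℝ) < B₂ := lt_of_lt_of_le one_pos hB₂1
  have hP1 : (1:ℝ) ≤ P := by
    rw [hP]
    calc (1:ℝ) = 1 * 1 := by norm_num
      _ ≤ B₁ ^ (δ - 1) * B₂ ^ δ :=
        mul_le_mul (one_le_pow₀ hB₁1) (one_le_pow₀ hB₂1) (by norm_num) (by positivity)
  have hP0 : (0:ℝ) < P := lt_of_lt_of_le one_pos hP1
  set E : ℝ := Real.sqrt P with hE
  have hE1 : (1:ℝ) ≤ E := by
    rw [hE, show (1:ℝ) = Real.sqrt 1 by simp]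
    exact Real.sqrt_le_sqrt hP1
  have hdetE : |A.det| ≤ E := by
    rw [hE]
    exact (Real.le_sqrt (abs_nonneg _) (le_of_lt hP0)).mpr (by rw [sq_abs]; exact hhad)
  have hΔE : |((disc g : ℚ) : ℝ)| ≤ E := le_trans hdisc hdetE
  have hlog1 : Real.log |((disc g : ℚ) : ℝ)| ≤ Real.log E := by
    rcases eq_or_lt_of_le (abs_nonneg ((disc g : ℚ) : ℝ)) with h0 | h0
    · rw [← h0, Real.log_zero]
      exact Real.log_nonneg hE1
    · exact Real.log_le_log h0 hΔE
  have hlogE : Real.log E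
      = (((δ - 1 : ℕ) : ℝ) * Real.log B₁ + (δ : ℝ) * Real.log B₂) / 2 := by
    rw [hE, Real.log_sqrt (le_of_lt hP0), hP,
      Real.log_mul (by positivity) (by positivity), Real.log_pow, Real.log_pow]
  have hcastδ : ((δ - 1 : ℕ) : ℝ) = d - 1 := by
    rw [Nat.cast_sub hdeg, hdd]; simp
  have hx0 : (0:ℝ) < d * (2*d+1) / 6 := by nlinarith
  have hlogB₁ : Real.log B₁ = Real.log (d+1) + 2 * ((s-1) * Real.log 2) := by
    rw [hB₁, Real.log_mul (by positivity) (by positivity), Real.log_pow, hC,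
      Real.log_rpow two_pos]
    ring
  have hlogB₂ : Real.log B₂
      = 2 * ((s-1) * Real.log 2) + (Real.log (d+1) + Real.log (d * (2*d+1) / 6)) := by
    have hsplit : d*(d+1)*(2*d+1)/6 = (d+1) * (d*(2*d+1)/6) := by ring
    rw [hB₂, hsplit, Real.log_mul (by positivity) (ne_of_gt (by positivity)),
      Real.log_mul (by positivity) (ne_of_gt hx0), Real.log_pow, hC, Real.log_rpow two_pos]
    ring
  have hT1 : Real.log 2 ≤ 1 := by
    have := Real.log_two_lt_d9
    linarith
  have hT0 : (0:ℝ) ≤ Real.log 2 := Real.log_nonneg one_le_two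
  have hkey : (2*d-1) * ((s-1) * Real.log 2) ≤ (2*d-1) * s := by
    apply mul_le_mul_of_nonneg_left _ (by linarith)
    nlinarith
  calc Real.log |((disc g : ℚ) : ℝ)| ≤ Real.log E := hlog1
    _ = ((d-1) * (Real.log (d+1) + 2*((s-1)*Real.log 2))
          + d * (2*((s-1)*Real.log 2) + (Real.log (d+1) + Real.log (d * (2*d+1) / 6)))) / 2 := by
        rw [hlogE, hcastδ, hlogB₁, hlogB₂]
    _ = ((2*d-1)/2) * Real.log (d+1) + (d/2) * Real.log (d * (2*d+1) / 6)
          + (2*d-1) * ((s-1) * Real.log 2) := by ring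
    _ ≤ (2*d-1) * s + ((2*d-1)/2) * Real.log (d+1) + (d/2) * Real.log (d * (2*d+1) / 6) := by
        linarith [hkey]
end

section
/- Let α := 2 − 3/(4 log 2), where log denotes the natural logarithm. Then for every natural number d and every integer j with 0 ≤ j ≤ d, one has C(d, j) · √(d + 1) ≤ 2^{d + α}, where C(d, j) denotes the binomial coefficient. -/
lemma ev (n : ℕ) : (2*n+1) * ((2*n).choose n)^2 ≤ 16^n := by
  induction n with
  | zero => simp
  | succ n ih =>
    set C := (2*n).choose n with hC
    set D := (2*n+2).choose (n+1) with hDdef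
    have h1 : (2*n+2) * (2*n+1).choose n = D * (n+1) := by
      have := Nat.add_one_mul_choose_eq (2*n+1) n
      simpa [Nat.succ_eq_add_one, Nat.choose_symm_half] using this
    have h2 : (2*n+1) * C = (2*n+1).choose n * (n+1) := by
      have := Nat.add_one_mul_choose_eq (2*n) n
      simpa [Nat.succ_eq_add_one, Nat.choose_symm_half] using this
    have hD : (n+1)^2 * D = (2*n+2)*(2*n+1)*C := by
      have := congrArg (· * (n+1)) h2
      nlinarith [h1, h2]
    have e : 2*(n+1) = 2*n+2 := by ring
    rw [e]
    show (2*n+2+1) * D^2 ≤ 16^(n+1)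
    have hgoal : (2*n+2+1) * D^2 = (2*n+3) * D^2 := by ring
    rw [hgoal]
    have hkey : (n+1)^4 * ((2*n+3)*D^2) ≤ (n+1)^4 * 16^(n+1) := by
      calc (n+1)^4 * ((2*n+3)*D^2) = (2*n+3) * ((n+1)^2*D)^2 := by ring
        _ = (2*n+3) * ((2*n+2)*(2*n+1)*C)^2 := by rw [hD]
        _ = ((2*n+3)*(2*n+2)^2*(2*n+1)) * ((2*n+1)*C^2) := by ring
        _ ≤ ((2*n+3)*(2*n+2)^2*(2*n+1)) * 16^n := Nat.mul_le_mul_left _ ih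
        _ ≤ (16*(n+1)^4) * 16^n := Nat.mul_le_mul_right _ (by nlinarith)
        _ = (n+1)^4 * 16^(n+1) := by ring
    exact Nat.le_of_mul_le_mul_left hkey (by positivity)

lemma keyNat (d : ℕ) : (d+1) * (d.choose (d/2))^2 ≤ 4^d := by
  rcases Nat.even_or_odd d with ⟨n, hn⟩ | ⟨n, hn⟩
  · subst hn
    have := ev n
    have h2 : (n+n)/2 = n := by omega
    have h3 : (4:ℕ)^(n+n) = 16^n := by rw [pow_add, ← mul_pow]; norm_num
    rw [h2, h3]
    have : n + n = 2*n := by ring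
    rw [this] at *
    omega
  · subst hn
    -- d = 2n+1, d/2 = n
    have h2 : (2*n+1)/2 = n := by omega
    rw [h2]
    set C := (2*n).choose n with hC
    set E := (2*n+1).choose n with hE
    have hrel : (2*n+1) * C = E * (n+1) := by
      have := Nat.add_one_mul_choose_eq (2*n) n
      simpa [Nat.succ_eq_add_one, Nat.choose_symm_half] using this
    have ih := ev n
    have hkey : (n+1)^2 * ((2*n+1+1) * E^2) ≤ (n+1)^2 * 4^(2*n+1) := by
      calc (n+1)^2 * ((2*n+1+1) * E^2) = (2*n+2) * (E*(n+1))^2 := by ring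
        _ = (2*n+2) * ((2*n+1)*C)^2 := by rw [← hrel]
        _ = ((2*n+2)*(2*n+1)) * ((2*n+1)*C^2) := by ring
        _ ≤ ((2*n+2)*(2*n+1)) * 16^n := Nat.mul_le_mul_left _ ih
        _ ≤ (4*(n+1)^2) * 16^n := Nat.mul_le_mul_right _ (by nlinarith)
        _ = (n+1)^2 * 4^(2*n+1) := by
              have h16 : (4:ℕ)^(2*n+1) = 16^n * 4 := by rw [pow_succ, pow_mul]; norm_num
              rw [h16]; ring
    exact Nat.le_of_mul_le_mul_left hkey (by positivity)

/-- Let `α := 2 − 3/(4 log 2)`. For all naturals `j ≤ d`, `C(d, j) · √(d + 1) ≤ 2^(d + α)`. -/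
theorem stmt10 (d j : ℕ) (hj : j ≤ d) :
    (d.choose j : ℝ) * Real.sqrt (d + 1) ≤ (2 : ℝ) ^ ((d : ℝ) + (2 - 3 / (4 * Real.log 2))) := by
  have h1 : (d.choose j : ℝ) * Real.sqrt (d + 1) ≤ (2:ℝ)^d := by
    have hsq : ((d.choose j : ℝ) * Real.sqrt (d + 1))^2 ≤ ((2:ℝ)^d)^2 := by
      have hn : (d+1) * (d.choose j)^2 ≤ 4^d :=
        le_trans (Nat.mul_le_mul_left _ (Nat.pow_le_pow_left (Nat.choose_le_middle j d) 2)) (keyNat d)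
      have hcast : ((d+1 : ℕ) : ℝ) * ((d.choose j : ℝ))^2 ≤ (4:ℝ)^d := by
        exact_mod_cast hn
      have hs : Real.sqrt ((d:ℝ) + 1) ^ 2 = (d:ℝ)+1 := Real.sq_sqrt (by positivity)
      calc ((d.choose j : ℝ) * Real.sqrt (d + 1))^2
          = ((d+1:ℕ):ℝ) * ((d.choose j:ℝ))^2 := by
            push_cast; rw [mul_pow, hs]; ring
        _ ≤ (4:ℝ)^d := hcast
        _ = ((2:ℝ)^d)^2 := by rw [← pow_mul, mul_comm d 2, pow_mul]; norm_num
    have h0 : (0:ℝ) ≤ (2:ℝ)^d := by positivity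
    nlinarith [Real.sqrt_nonneg ((d:ℝ)+1),
      mul_nonneg (Nat.cast_nonneg (d.choose j) : (0:ℝ) ≤ _) (Real.sqrt_nonneg ((d:ℝ)+1))]
  have h2 : (2:ℝ)^d ≤ (2:ℝ) ^ ((d : ℝ) + (2 - 3 / (4 * Real.log 2))) := by
    rw [← Real.rpow_natCast 2 d]
    apply Real.rpow_le_rpow_of_exponent_le one_le_two
    have hlog : (0.6931471803 : ℝ) < Real.log 2 := Real.log_two_gt_d9
    have : 3 / (4 * Real.log 2) ≤ 2 := by
      rw [div_le_iff₀ (by linarith)]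
      linarith
    linarith
  linarith
end
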